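/- For all integers 1 ≤ m ≤ n, the following identity holds in ℝ: Σ_{s=0}^{m-1} C(m-1,s)·(n-s)^{m-s-2}·(s+1)^{s} = (n+1)^{m-1}/(n-m+1). -/

import Mathlib

open Finset

/-- Alternating binomial sum applied to `(x+k)^d`. -/
noncomputable def abelS (n d : ℕ) (x : ℝ) : ℝ :=
  ∑ k ∈ range (n+1), (-1:ℝ)^k * (n.choose k : ℝ) * (x+k)^d

lemma abelS_succ (n d : ℕ) (x : ℝ) :
    abelS (n+1) d x = abelS n d x - abelS n d (x+1) := by
  unfold abelS
  rw [Finset.sum_range_succ' _ (n+1)]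
  have h1 : ∀ i ∈ range (n+1),
      (-1:ℝ)^(i+1) * (((n+1).choose (i+1) : ℕ) : ℝ) * (x+(i+1:ℕ))^d
        = ((-1:ℝ)^(i+1) * (n.choose (i+1) : ℝ) * (x+(i+1:ℕ))^d)
          + (-((-1:ℝ)^i * (n.choose i : ℝ) * ((x+1)+i)^d)) := by
    intro i _
    rw [Nat.choose_succ_succ]
    push_cast
    ring
  rw [Finset.sum_congr rfl h1, Finset.sum_add_distrib, Finset.sum_neg_distrib]
  have h2 : ∑ i ∈ range (n+1), (-1:ℝ)^(i+1) * (n.choose (i+1) : ℝ) * (x+(i+1:ℕ))^d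
      = ∑ i ∈ range n, (-1:ℝ)^(i+1) * (n.choose (i+1) : ℝ) * (x+(i+1:ℕ))^d := by
    rw [Finset.sum_range_succ]
    simp
  rw [h2]
  have h3 : ∑ k ∈ range (n+1), (-1:ℝ)^k * (n.choose k : ℝ) * (x+k)^d
      = (∑ i ∈ range n, (-1:ℝ)^(i+1) * (n.choose (i+1) : ℝ) * (x+(i+1:ℕ))^d)
        + (-1:ℝ)^(0:ℕ) * (n.choose 0 : ℝ) * (x+(0:ℕ))^d := by
    rw [Finset.sum_range_succ' _ n]
  rw [h3]
  simp only [Nat.choose_zero_right, Nat.cast_one]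
  ring

lemma abelS_main : ∀ n : ℕ,
    (∀ d < n, ∀ x : ℝ, abelS n d x = 0) ∧ (∀ x : ℝ, abelS n n (x+1) = abelS n n x) := by
  intro n
  induction n with
  | zero =>
    constructor
    · intro d hd; omega
    · intro x; simp [abelS]
  | succ n ih =>
    obtain ⟨ih0, ih1⟩ := ih
    have hP : ∀ d < n+1, ∀ x : ℝ, abelS (n+1) d x = 0 := by
      intro d hd x
      rw [abelS_succ]
      rcases Nat.lt_succ_iff_lt_or_eq.mp hd with h | h
      · rw [ih0 d h x, ih0 d h (x+1), sub_zero]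
      · subst h; rw [ih1 x, sub_self]
    refine ⟨hP, ?_⟩
    intro x
    have key : abelS (n+1) (n+1) (x+1) - abelS (n+1) (n+1) x
        = ∑ j ∈ range (n+1), ((n+1).choose j : ℝ) * abelS (n+1) j x := by
      unfold abelS
      rw [← Finset.sum_sub_distrib]
      have hterm : ∀ k ∈ range (n+2),
          (-1:ℝ)^k * ((n+1).choose k : ℝ) * (x+1+k)^(n+1)
            - (-1:ℝ)^k * ((n+1).choose k : ℝ) * (x+k)^(n+1)
          = ∑ j ∈ range (n+1), ((n+1).choose j : ℝ)
              * ((-1:ℝ)^k * ((n+1).choose k : ℝ) * (x+k)^j) := by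
        intro k _
        have hb : (x+1+(k:ℝ))^(n+1) = ((x+k)+1)^(n+1) := by ring_nf
        rw [hb, add_pow]
        rw [Finset.sum_range_succ]
        simp only [one_pow, Nat.choose_self, Nat.cast_one, Nat.sub_self, mul_one, pow_zero]
        rw [mul_add, add_sub_cancel_right, Finset.mul_sum]
        exact Finset.sum_congr rfl fun j _ => by ring
      rw [Finset.sum_congr rfl hterm, Finset.sum_comm]
      apply Finset.sum_congr rfl
      intro j _
      rw [← Finset.mul_sum]
    have hz : ∀ j ∈ range (n+1), ((n+1).choose j : ℝ) * abelS (n+1) j x = 0 := by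
      intro j hj
      rw [hP j (Finset.mem_range.mp hj) x, mul_zero]
    rw [Finset.sum_eq_zero hz] at key
    linarith [key]

/-- Abel's binomial theorem at x = 1. -/
noncomputable def abelA (n : ℕ) (y : ℝ) : ℝ :=
  ∑ k ∈ range (n+1), (n.choose k : ℝ) * (1+(k:ℝ))^(k-1) * (y + ((n:ℝ) - k))^(n-k)

lemma abelA_eq : ∀ n : ℕ, ∀ y : ℝ, abelA n y = (1+y+n)^n := by
  intro n
  induction n with
  | zero => intro y; simp [abelA]
  | succ n ih =>
    intro y
    -- derivative of each summand
    have hderiv : ∀ z : ℝ, HasDerivAt (fun y => abelA (n+1) y)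
        (∑ k ∈ range (n+2), ((n+1).choose k : ℝ) * (1+(k:ℝ))^(k-1)
          * ((((n+1)-k : ℕ) : ℝ) * (z + (((n+1):ℝ) - k))^(n-k))) z := by
      intro z
      unfold abelA
      apply HasDerivAt.fun_sum
      intro k hk
      have h1 : HasDerivAt (fun y : ℝ => y + (((n+1):ℝ) - k)) 1 z :=
        (hasDerivAt_id z).add_const _
      have h2 := h1.pow ((n+1)-k)
      have h3 := h2.const_mul (((n+1).choose k : ℝ) * (1+(k:ℝ))^(k-1))
      convert h3 using 1
      case e'_4 => rfl
      · funext w; simp only [Pi.pow_apply]; push_cast; ring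
      · have he : (n+1)-k-1 = n-k := by omega
        rw [he]; push_cast; ring
    -- the derivative equals (n+1)*(y+n+2)^n
    have hD : ∀ z : ℝ, (∑ k ∈ range (n+2), ((n+1).choose k : ℝ) * (1+(k:ℝ))^(k-1)
          * ((((n+1)-k : ℕ) : ℝ) * (z + (((n+1):ℝ) - k))^(n-k)))
        = ((n:ℝ)+1) * (1+(z+1)+n)^n := by
      intro z
      rw [Finset.sum_range_succ]
      simp only [Nat.sub_self, Nat.cast_zero, zero_mul, mul_zero, add_zero]
      have : ∀ k ∈ range (n+1), ((n+1).choose k : ℝ) * (1+(k:ℝ))^(k-1)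
          * ((((n+1)-k : ℕ) : ℝ) * (z + (((n+1):ℝ) - k))^(n-k))
          = ((n:ℝ)+1) * ((n.choose k : ℝ) * (1+(k:ℝ))^(k-1) * ((z+1) + ((n:ℝ) - k))^(n-k)) := by
        intro k hk
        have hk' : k ≤ n := Nat.lt_succ_iff.mp (Finset.mem_range.mp hk)
        have hc : ((n+1).choose k : ℝ) * (((n+1)-k : ℕ) : ℝ) = ((n:ℝ)+1) * (n.choose k : ℝ) := by
          have := Nat.choose_mul_succ_eq n k
          exact_mod_cast by
            have : ((n.choose k * (n+1) : ℕ) : ℝ) = (((n+1).choose k * (n+1-k) : ℕ) : ℝ) := by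
              exact_mod_cast congrArg (Nat.cast (R := ℝ)) this
            push_cast at this
            linarith [this]
        have hb : (z + (((n+1):ℝ) - k)) = ((z+1) + ((n:ℝ) - k)) := by push_cast; ring
        rw [hb]
        calc ((n+1).choose k : ℝ) * (1+(k:ℝ))^(k-1)
              * ((((n+1)-k : ℕ) : ℝ) * ((z+1) + ((n:ℝ) - k))^(n-k))
            = (((n+1).choose k : ℝ) * (((n+1)-k : ℕ) : ℝ)) * ((1+(k:ℝ))^(k-1) * ((z+1) + ((n:ℝ) - k))^(n-k)) := by ring
          _ = ((n:ℝ)+1) * ((n.choose k : ℝ) * (1+(k:ℝ))^(k-1) * ((z+1) + ((n:ℝ) - k))^(n-k)) := by rw [hc]; ring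
      rw [Finset.sum_congr rfl this, ← Finset.mul_sum]
      have := ih (z+1)
      unfold abelA at this
      rw [this]
    -- F := A(n+1) - (1+y+(n+1))^(n+1) has zero derivative
    set F : ℝ → ℝ := fun y => abelA (n+1) y - (1+y+((n+1:ℕ):ℝ))^(n+1) with hF
    have hF' : ∀ z : ℝ, HasDerivAt F 0 z := by
      intro z
      have h1 : HasDerivAt (fun y : ℝ => 1+y+((n+1:ℕ):ℝ)) 1 z := by
        have := ((hasDerivAt_id z).const_add (1:ℝ)).add_const ((n+1:ℕ):ℝ)
        exact this
      have h2 := h1.pow (n+1)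
      have h3 := (hderiv z).sub h2
      convert h3 using 1
      case e'_4 => rfl
      case e'_5 => rfl
      case e'_8 => rfl
      rw [hD z]
      simp only [Nat.add_sub_cancel]
      push_cast
      ring_nf
    have hconst : F y = F (-(n:ℝ)-2) :=
      is_const_of_deriv_eq_zero (fun z => (hF' z).differentiableAt)
        (fun z => (hF' z).deriv) y (-(n:ℝ)-2)
    -- compute F at -n-2
    have hval : F (-(n:ℝ)-2) = 0 := by
      rw [hF]
      simp only
      have hz : (1 + (-(n:ℝ)-2) + ((n+1:ℕ):ℝ)) = 0 := by push_cast; ring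
      rw [hz, zero_pow (Nat.succ_ne_zero n)]
      rw [sub_zero]
      unfold abelA
      have hterm : ∀ k ∈ range (n+2), ((n+1).choose k : ℝ) * (1+(k:ℝ))^(k-1)
          * ((-(n:ℝ)-2) + ((((n+1):ℕ):ℝ) - k))^((n+1)-k)
          = (-1:ℝ)^(n+1) * ((-1:ℝ)^k * (((n+1).choose k : ℕ) : ℝ) * ((1:ℝ)+k)^n) := by
        intro k hk
        have hk' : k ≤ n+1 := Nat.lt_succ_iff.mp (Finset.mem_range.mp hk)
        have hb : ((-(n:ℝ)-2) + ((((n+1):ℕ):ℝ) - k)) = -(1+(k:ℝ)) := by push_cast; ring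
        rw [hb, neg_pow]
        have hsgn : (-1:ℝ)^((n+1)-k) = (-1:ℝ)^(n+1) * (-1:ℝ)^k := by
          have : (-1:ℝ)^(n+1) * (-1:ℝ)^k = (-1:ℝ)^((n+1)+k) := (pow_add (-1:ℝ) (n+1) k).symm
          rw [this, show (n+1)+k = ((n+1)-k) + 2*k by omega, pow_add, pow_mul]
          norm_num
        rw [hsgn]
        have hp : (1+(k:ℝ))^(k-1) * (1+(k:ℝ))^((n+1)-k) = (1+(k:ℝ))^n := by
          cases k with
          | zero => norm_num
          | succ j =>
            rw [← pow_add]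
            congr 1
            omega
        calc ((n+1).choose k : ℝ) * (1+(k:ℝ))^(k-1) * ((-1:ℝ)^(n+1) * (-1:ℝ)^k * (1+(k:ℝ))^((n+1)-k))
            = (-1:ℝ)^(n+1) * ((-1:ℝ)^k * (((n+1).choose k : ℕ) : ℝ) * ((1+(k:ℝ))^(k-1) * (1+(k:ℝ))^((n+1)-k))) := by ring
          _ = _ := by rw [hp]
      rw [Finset.sum_congr rfl hterm, ← Finset.mul_sum]
      have h0 := (abelS_main (n+1)).1 n (Nat.lt_succ_self n) 1
      unfold abelS at h0
      rw [h0, mul_zero]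
    have : F y = 0 := hconst.trans hval
    rw [hF] at this
    simp only at this
    exact sub_eq_zero.mp this

lemma choose_cast_id (n k : ℕ) (hk : k ≤ n) :
    ((n+1).choose k : ℝ) * (((n:ℝ)+1) - k) = ((n:ℝ)+1) * (n.choose k : ℝ) := by
  have h := Nat.choose_mul_succ_eq n k
  have h2 : ((n.choose k * (n+1) : ℕ) : ℝ) = (((n+1).choose k * (n+1-k) : ℕ) : ℝ) :=
    congrArg (Nat.cast (R := ℝ)) h
  push_cast [Nat.cast_sub (by omega : k ≤ n + 1)] at h2
  linarith [h2]

lemma abelA_trunc (n : ℕ) (y : ℝ) :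
    ∑ k ∈ range (n+1), ((n+1).choose k : ℝ) * (1+(k:ℝ))^(k-1) * (y + (((n:ℝ)+1) - k))^((n+1)-k)
      = (1+y+((n:ℝ)+1))^(n+1) - ((n:ℝ)+2)^n := by
  have hA := abelA_eq (n+1) y
  unfold abelA at hA
  rw [Finset.sum_range_succ] at hA
  push_cast at hA ⊢
  have hlast : (((n+1).choose (n+1) : ℕ) : ℝ) * (1+((n:ℝ)+1))^((n+1)-1)
      * (y + (((n:ℝ)+1) - ((n:ℝ)+1)))^((n+1)-(n+1)) = ((n:ℝ)+2)^n := by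
    simp [Nat.choose_self]
    ring_nf
  rw [Nat.add_sub_cancel, Nat.sub_self] at hlast
  rw [Nat.sub_self n] at hA
  rw [hlast] at hA
  linarith [hA]

lemma abelB (n : ℕ) (y : ℝ) :
    ∑ k ∈ range (n+1), ((n+1).choose k : ℝ) * (1+(k:ℝ))^(k-1) * y * (y + (((n:ℝ)+1) - k))^(n-k)
      = (1+y) * (1+y+((n:ℝ)+1))^n - ((n:ℝ)+2)^n := by
  have key : ∀ k ∈ range (n+1),
      ((n+1).choose k : ℝ) * (1+(k:ℝ))^(k-1) * y * (y + (((n:ℝ)+1) - k))^(n-k)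
        = ((n+1).choose k : ℝ) * (1+(k:ℝ))^(k-1) * (y + (((n:ℝ)+1) - k))^((n+1)-k)
          - ((n:ℝ)+1) * ((n.choose k : ℝ) * (1+(k:ℝ))^(k-1) * ((y+1) + ((n:ℝ) - k))^(n-k)) := by
    intro k hk
    have hk' : k ≤ n := Nat.lt_succ_iff.mp (Finset.mem_range.mp hk)
    have hpow : (y + (((n:ℝ)+1) - k))^((n+1)-k)
        = (y + (((n:ℝ)+1) - k)) * (y + (((n:ℝ)+1) - k))^(n-k) := by
      rw [show (n+1)-k = (n-k)+1 by omega, pow_succ]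
      ring
    have hb : ((y+1) + ((n:ℝ) - k)) = (y + (((n:ℝ)+1) - k)) := by ring
    rw [hpow, hb]
    have hc := choose_cast_id n k hk'
    linear_combination (-((1+(k:ℝ))^(k-1) * (y + (((n:ℝ)+1) - k))^(n-k))) * hc
  rw [Finset.sum_congr rfl key, Finset.sum_sub_distrib, abelA_trunc, ← Finset.mul_sum]
  have hA := abelA_eq n (y+1)
  unfold abelA at hA
  rw [hA]
  ring

lemma abelM (n : ℕ) (y : ℝ) :
    y * ∑ k ∈ range (n+1), ((n+1).choose k : ℝ) * (1+(k:ℝ))^k * (y + (((n:ℝ)+1) - k))^(n-k)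
      = (1+y+((n:ℝ)+1))^(n+1) - ((n:ℝ)+2)^(n+1) := by
  rw [Finset.mul_sum]
  have key : ∀ k ∈ range (n+1),
      y * (((n+1).choose k : ℝ) * (1+(k:ℝ))^k * (y + (((n:ℝ)+1) - k))^(n-k))
        = (1+y+((n:ℝ)+1)) * (((n+1).choose k : ℝ) * (1+(k:ℝ))^(k-1) * y * (y + (((n:ℝ)+1) - k))^(n-k))
          - y * (((n+1).choose k : ℝ) * (1+(k:ℝ))^(k-1) * (y + (((n:ℝ)+1) - k))^((n+1)-k)) := by
    intro k hk
    have hk' : k ≤ n := Nat.lt_succ_iff.mp (Finset.mem_range.mp hk)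
    have hpow : (y + (((n:ℝ)+1) - k))^((n+1)-k)
        = (y + (((n:ℝ)+1) - k)) * (y + (((n:ℝ)+1) - k))^(n-k) := by
      rw [show (n+1)-k = (n-k)+1 by omega, pow_succ]; ring
    have hone : ((1:ℝ)+(k:ℝ))^k = (1+(k:ℝ))*(1+(k:ℝ))^(k-1) := by
      cases k with
      | zero => norm_num
      | succ j => rw [show j+1-1 = j from rfl, pow_succ]; push_cast; ring
    rw [hpow, hone]
    ring
  rw [Finset.sum_congr rfl key, Finset.sum_sub_distrib, ← Finset.mul_sum, ← Finset.mul_sum,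
    abelB, abelA_trunc]
  ring

/-- For `1 ≤ m ≤ n`, in `ℝ` (powers with possibly negative integer exponents are `zpow`):
`Σ_{s=0}^{m-1} C(m-1,s)·(n-s)^(m-s-2)·(s+1)^s = (n+1)^(m-1)/(n-m+1)`. -/
theorem abel_sum_minus_one_zero (m n : ℕ) (hm : 1 ≤ m) (hmn : m ≤ n) :
    (∑ s ∈ Finset.range m,
        ((m - 1).choose s : ℝ) * ((n : ℝ) - s) ^ ((m : ℤ) - s - 2) * ((s : ℝ) + 1) ^ s)
      = ((n : ℝ) + 1) ^ (m - 1) / ((n : ℝ) - m + 1) := by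
  rcases Nat.lt_or_ge m 2 with hm2 | hm2
  · have : m = 1 := by omega
    subst this
    simp only [Finset.sum_range_one, Nat.cast_zero, Nat.cast_one]
    rw [show (1:ℤ) - 0 - 2 = -1 by ring, zpow_neg_one,
      show (n:ℝ) - 1 + 1 = (n:ℝ) by ring]
    norm_num
  · obtain ⟨N, rfl⟩ : ∃ N, m = N + 2 := ⟨m - 2, by omega⟩
    have hNn : N + 2 ≤ n := hmn
    have hnR : ((N:ℝ) + 2) ≤ (n:ℝ) := by exact_mod_cast hNn
    set y : ℝ := (n:ℝ) - ((N+2:ℕ):ℝ) + 1 with hy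
    have hy1 : (1:ℝ) ≤ y := by rw [hy]; push_cast; linarith
    have hy0 : y ≠ 0 := by linarith
    have hM := abelM N y
    -- massage the sum in hM into the target's inner sum
    have hsum : ∑ k ∈ range (N+1), ((N+1).choose k : ℝ) * (1+(k:ℝ))^k * (y + (((N:ℝ)+1) - k))^(N-k)
        = ∑ s ∈ range (N+1), (((N+2) - 1).choose s : ℝ) * ((n : ℝ) - s) ^ (((N+2 : ℕ) : ℤ) - s - 2).toNat * ((s : ℝ) + 1) ^ s := by
      apply Finset.sum_congr rfl
      intro k hk
      have hk' : k ≤ N := Nat.lt_succ_iff.mp (Finset.mem_range.mp hk)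
      have hbase : y + (((N:ℝ)+1) - k) = (n:ℝ) - k := by rw [hy]; push_cast; ring
      have hexp : (((N+2 : ℕ) : ℤ) - k - 2).toNat = N - k := by push_cast; omega
      have hch : (N+2) - 1 = N + 1 := rfl
      rw [hbase, hexp, hch]
      ring
    -- the target's terms for s < N+1 use zpow with nonneg exponent
    rw [Finset.sum_range_succ]
    have hinner : ∀ s ∈ range (N+1),
        (((N+2) - 1).choose s : ℝ) * ((n : ℝ) - s) ^ (((N+2:ℕ) : ℤ) - s - 2) * ((s : ℝ) + 1) ^ s
          = (((N+2) - 1).choose s : ℝ) * ((n : ℝ) - s) ^ (((N+2 : ℕ) : ℤ) - s - 2).toNat * ((s : ℝ) + 1) ^ s := by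
      intro s hs
      have hs' : s ≤ N := Nat.lt_succ_iff.mp (Finset.mem_range.mp hs)
      have h0 : (0:ℤ) ≤ ((N+2 : ℕ) : ℤ) - s - 2 := by push_cast; omega
      rw [← Int.toNat_of_nonneg h0, zpow_natCast, Int.toNat_of_nonneg h0]
    rw [Finset.sum_congr rfl hinner, ← hsum]
    -- last term
    have hlast : (((N+2) - 1).choose (N+1) : ℝ) * ((n : ℝ) - (N+1 : ℕ)) ^ (((N+2:ℕ) : ℤ) - (N+1:ℕ) - 2) * (((N+1:ℕ) : ℝ) + 1) ^ (N+1)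
        = y⁻¹ * ((N:ℝ)+2)^(N+1) := by
      have he : ((N+2 : ℕ) : ℤ) - (N+1:ℕ) - 2 = -1 := by push_cast; ring
      have hb : (n:ℝ) - ((N+1:ℕ):ℝ) = y := by rw [hy]; push_cast; ring
      have hc : (((N+2) - 1).choose (N+1) : ℝ) = 1 := by norm_num
      rw [he, hb, zpow_neg_one, hc]
      push_cast
      ring
    rw [hlast]
    -- combine using hM
    have hM2 : ∑ k ∈ range (N+1), ((N+1).choose k : ℝ) * (1+(k:ℝ))^k * (y + (((N:ℝ)+1) - k))^(N-k)
        = (((n:ℝ)+1)^(N+1) - ((N:ℝ)+2)^(N+1)) / y := by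
      rw [eq_div_iff hy0, mul_comm, hM]
      have : (1:ℝ)+y+((N:ℝ)+1) = (n:ℝ)+1 := by rw [hy]; push_cast; ring
      rw [this]
    rw [hM2]
    have hexp2 : (N+2) - 1 = N+1 := rfl
    rw [hexp2]
    field_simp
    ring
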